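/- arXiv:2203.09267 — 7 statements merged into one kernel-verified Lean document; each statement's English description precedes it below -/
import Mathlib

section
/- Let D be a non-trivial 2-(k², k, λ) design with λ dividing k, admitting a flag-transitive automorphism group G. Then for any point x and any block B through x, and any point y ≠ x, the size of the G_x-orbit of y equals (k+1)·|B ∩ y^{G_x}|; in particular k+1 divides the length of every G_x-orbit on points other than {x}. -/
/-- Let `D` be a non-trivial `2-(k², k, λ)` design with `λ ∣ k`, admitting a
flag-transitive automorphism group `G`.  Then for any point `x`, any block `B` through
`x` and any point `y ≠ x`, `|y^{G_x}| = (k+1)·|B ∩ y^{G_x}|`; in particular `k+1`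
divides the length of every `G_x`-orbit on points other than `{x}`. -/
theorem stmt_1 {Pt ι : Type*} [Fintype Pt] [Fintype ι] [DecidableEq Pt]
    (k lam : ℕ) (Bl : ι → Finset Pt)
    (G : Type*) [Group G] [Finite G] [MulAction G Pt] [MulAction G ι]
    (hk : 2 < k) (hlam : 0 < lam) (hdvd : lam ∣ k)
    (hv : Fintype.card Pt = k ^ 2)
    (hsz : ∀ i, (Bl i).card = k)
    (hpair : ∀ x y : Pt, x ≠ y →
      (Finset.univ.filter fun i => x ∈ Bl i ∧ y ∈ Bl i).card = lam)
    (hcompat : ∀ (g : G) (i : ι) (x : Pt), x ∈ Bl i ↔ g • x ∈ Bl (g • i))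
    (hflag : ∀ (x : Pt) (i : ι), x ∈ Bl i → ∀ (y : Pt) (j : ι), y ∈ Bl j →
      ∃ g : G, g • x = y ∧ g • i = j)
    (x : Pt) (i : ι) (hxB : x ∈ Bl i) (y : Pt) (hyx : y ≠ x) :
    (MulAction.orbit (MulAction.stabilizer G x) y).ncard =
      (k + 1) * ((Bl i : Set Pt) ∩ MulAction.orbit (MulAction.stabilizer G x) y).ncard ∧
    (k + 1) ∣ (MulAction.orbit (MulAction.stabilizer G x) y).ncard := by
  classical
  set S := MulAction.stabilizer G x with hS
  set Os : Set Pt := MulAction.orbit S y with hOs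
  let O : Finset Pt := Finset.univ.filter (· ∈ Os)
  have hOcoe : (O : Set Pt) = Os := by ext z; simp [O]
  -- x not in the orbit
  have hxO : x ∉ Os := by
    rintro ⟨g, hg⟩
    apply hyx
    have hgx : (g : G) • x = x := g.2
    have hgy : (g : G) • y = x := hg
    calc y = (g : G)⁻¹ • ((g : G) • y) := (inv_smul_smul _ _).symm
      _ = (g : G)⁻¹ • x := by rw [hgy]
      _ = (g : G)⁻¹ • ((g : G) • x) := by rw [hgx]
      _ = x := inv_smul_smul _ _
  -- orbit is invariant under elements of the stabilizer
  have hOinv : ∀ g : G, g ∈ S → ∀ z, z ∈ Os → g • z ∈ Os := by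
    intro g hg z hz
    obtain ⟨h, rfl⟩ := hz
    exact ⟨⟨g, hg⟩ * h, by simp [mul_smul]⟩
  -- blocks through x
  set Bx : Finset ι := Finset.univ.filter (fun j => x ∈ Bl j) with hBx
  -- constant intersection size
  have hconst : ∀ j ∈ Bx, ((Bl j).filter (· ∈ Os)).card = ((Bl i).filter (· ∈ Os)).card := by
    intro j hj
    have hxj : x ∈ Bl j := by simpa [hBx] using hj
    obtain ⟨g, hg1, hg2⟩ := hflag x i hxB x j hxj
    have hgS : g ∈ S := hg1
    have himg : (Bl j).filter (· ∈ Os) = ((Bl i).filter (· ∈ Os)).image (g • ·) := by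
      ext z
      simp only [Finset.mem_image, Finset.mem_filter]
      constructor
      · rintro ⟨hzB, hzO⟩
        refine ⟨g⁻¹ • z, ⟨?_, ?_⟩, by simp⟩
        · rw [hcompat g i (g⁻¹ • z), smul_inv_smul, hg2]; exact hzB
        · exact hOinv g⁻¹ (inv_mem hgS) z hzO
      · rintro ⟨w, ⟨hwB, hwO⟩, rfl⟩
        refine ⟨?_, hOinv g hgS w hwO⟩
        rw [← hg2, ← hcompat g i w]; exact hwB
    rw [himg, Finset.card_image_of_injective _ (MulAction.injective g)]
  -- double counting: sum of intersections over blocks through x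
  have hcount1 : ∑ j ∈ Bx, ((Bl j).filter (· ∈ Os)).card = O.card * lam := by
    have step : ∀ j, ((Bl j).filter (· ∈ Os)).card = (O.filter (· ∈ Bl j)).card := by
      intro j; congr 1; ext z; simp [O, and_comm]
    calc ∑ j ∈ Bx, ((Bl j).filter (· ∈ Os)).card
        = ∑ j ∈ Bx, ∑ z ∈ O, if z ∈ Bl j then 1 else 0 := by
          simp_rw [step, Finset.card_filter]
      _ = ∑ z ∈ O, ∑ j ∈ Bx, if z ∈ Bl j then 1 else 0 := Finset.sum_comm
      _ = ∑ z ∈ O, (Bx.filter (fun j => z ∈ Bl j)).card := by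
          simp_rw [Finset.card_filter]
      _ = ∑ z ∈ O, lam := by
          apply Finset.sum_congr rfl
          intro z hz
          have hzO : z ∈ Os := by simpa [O] using hz
          have hzx : x ≠ z := fun h => hxO (h ▸ hzO)
          have : Bx.filter (fun j => z ∈ Bl j)
              = Finset.univ.filter (fun j => x ∈ Bl j ∧ z ∈ Bl j) := by
            ext j; simp [hBx, Finset.mem_filter, and_assoc]
          rw [this, hpair x z hzx]
      _ = O.card * lam := by rw [Finset.sum_const, smul_eq_mul]
  -- number of blocks through x is lam * (k+1)
  have hr : Bx.card = lam * (k + 1) := by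
    have hcount2 : ∑ j ∈ Bx, ((Finset.univ.erase x).filter (· ∈ Bl j)).card
        = (k ^ 2 - 1) * lam := by
      calc ∑ j ∈ Bx, ((Finset.univ.erase x).filter (· ∈ Bl j)).card
          = ∑ j ∈ Bx, ∑ z ∈ Finset.univ.erase x, if z ∈ Bl j then 1 else 0 := by
            simp_rw [Finset.card_filter]
        _ = ∑ z ∈ Finset.univ.erase x, ∑ j ∈ Bx, if z ∈ Bl j then 1 else 0 :=
            Finset.sum_comm
        _ = ∑ z ∈ Finset.univ.erase x, (Bx.filter (fun j => z ∈ Bl j)).card := by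
            simp_rw [Finset.card_filter]
        _ = ∑ z ∈ Finset.univ.erase x, lam := by
            apply Finset.sum_congr rfl
            intro z hz
            have hzx : x ≠ z := (Finset.mem_erase.mp hz).1.symm
            have : Bx.filter (fun j => z ∈ Bl j)
                = Finset.univ.filter (fun j => x ∈ Bl j ∧ z ∈ Bl j) := by
              ext j; simp [hBx, Finset.mem_filter, and_assoc]
            rw [this, hpair x z hzx]
        _ = (k ^ 2 - 1) * lam := by
            rw [Finset.sum_const, smul_eq_mul, Finset.card_erase_of_mem (Finset.mem_univ x),
              Finset.card_univ, hv]
    have hcount2' : ∑ j ∈ Bx, ((Finset.univ.erase x).filter (· ∈ Bl j)).card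
        = Bx.card * (k - 1) := by
      rw [Finset.sum_congr rfl (fun j hj => ?_), Finset.sum_const, smul_eq_mul]
      have hxj : x ∈ Bl j := by simpa [hBx] using hj
      have : (Finset.univ.erase x).filter (· ∈ Bl j) = (Bl j).erase x := by
        ext z; simp [Finset.mem_erase, and_comm]
      rw [this, Finset.card_erase_of_mem hxj, hsz]
    have hsq : k ^ 2 - 1 = (k + 1) * (k - 1) := by
      obtain ⟨m, rfl⟩ := Nat.exists_eq_add_of_le (le_of_lt hk)
      simp [pow_two]
      ring_nf
      omega
    have hmul : Bx.card * (k - 1) = (lam * (k + 1)) * (k - 1) := by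
      rw [← hcount2', hcount2, hsq]; ring
    exact Nat.eq_of_mul_eq_mul_right (by omega) hmul
  -- combine
  have hmain : O.card = (k + 1) * ((Bl i).filter (· ∈ Os)).card := by
    have hsum : ∑ j ∈ Bx, ((Bl j).filter (· ∈ Os)).card
        = Bx.card * ((Bl i).filter (· ∈ Os)).card := by
      rw [Finset.sum_congr rfl hconst, Finset.sum_const, smul_eq_mul]
    have : lam * O.card = lam * ((k + 1) * ((Bl i).filter (· ∈ Os)).card) := by
      rw [← mul_comm (O.card) lam, ← hcount1, hsum, hr]; ring
    exact Nat.eq_of_mul_eq_mul_left hlam this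
  have hncard1 : Os.ncard = O.card := by rw [← hOcoe, Set.ncard_coe_finset]
  have hncard2 : ((Bl i : Set Pt) ∩ Os).ncard = ((Bl i).filter (· ∈ Os)).card := by
    rw [← Set.ncard_coe_finset]
    congr 1
    ext z; simp
  constructor
  · rw [hncard1, hncard2, hmain]
  · rw [hncard1, hmain]; exact Dvd.intro _ rfl
end

section
/- Let D be a non-trivial 2-(k², k, λ) design with λ | k, admitting a flag-transitive automorphism group G. Then |G| = k²·|G_x| for any point x, |G_x| = λ(k+1)|G_{x,B}| for any flag (x,B), and consequently |G| < |G_x|³ (i.e., G_x is a large subgroup of G). -/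
/-- Let `D` be a non-trivial `2-(k², k, λ)` design with `λ ∣ k`, admitting a
flag-transitive automorphism group `G`.  Then `|G| = k²·|G_x|` for any point `x`,
`|G_x| = λ(k+1)·|G_{x,B}|` for any flag `(x,B)`, and consequently `|G| < |G_x|³`,
i.e. `G_x` is a large subgroup of `G`. -/
theorem stmt_2 {Pt ι : Type*} [Fintype Pt] [Fintype ι] [DecidableEq Pt]
    (k lam : ℕ) (Bl : ι → Finset Pt)
    (G : Type*) [Group G] [Finite G] [MulAction G Pt] [MulAction G ι]
    (hk : 2 < k) (hlam : 0 < lam) (hdvd : lam ∣ k)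
    (hv : Fintype.card Pt = k ^ 2)
    (hsz : ∀ i, (Bl i).card = k)
    (hpair : ∀ x y : Pt, x ≠ y →
      (Finset.univ.filter fun i => x ∈ Bl i ∧ y ∈ Bl i).card = lam)
    (hcompat : ∀ (g : G) (i : ι) (x : Pt), x ∈ Bl i ↔ g • x ∈ Bl (g • i))
    (hflag : ∀ (x : Pt) (i : ι), x ∈ Bl i → ∀ (y : Pt) (j : ι), y ∈ Bl j →
      ∃ g : G, g • x = y ∧ g • i = j)
    (x : Pt) (i : ι) (hxB : x ∈ Bl i) :
    Nat.card G = k ^ 2 * Nat.card (MulAction.stabilizer G x) ∧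
    Nat.card (MulAction.stabilizer G x) =
      lam * (k + 1) * Nat.card ↥(MulAction.stabilizer G x ⊓ MulAction.stabilizer G i) ∧
    Nat.card G < Nat.card (MulAction.stabilizer G x) ^ 3 := by
  classical
  set S : Finset ι := Finset.univ.filter (fun j => x ∈ Bl j) with hSdef
  -- the replication number: S.card = lam * (k+1)
  have hr : S.card = lam * (k + 1) := by
    set T : Finset (Pt × ι) :=
      Finset.univ.filter (fun p => p.1 ≠ x ∧ x ∈ Bl p.2 ∧ p.1 ∈ Bl p.2) with hTdef
    have h1 : T.card = ∑ j ∈ S, (T.filter fun p => p.2 = j).card := by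
      apply Finset.card_eq_sum_card_fiberwise
      intro p hp
      simp only [hTdef, Finset.mem_coe, Finset.mem_filter, Finset.mem_univ, true_and] at hp
      simp only [hSdef, Finset.mem_coe, Finset.mem_filter, Finset.mem_univ, true_and]
      exact hp.2.1
    have h2 : ∀ j ∈ S, (T.filter fun p => p.2 = j).card = k - 1 := by
      intro j hj
      simp only [hSdef, Finset.mem_filter, Finset.mem_univ, true_and] at hj
      have himg : (T.filter fun p => p.2 = j) = ((Bl j).erase x).image (fun y => (y, j)) := by
        ext p
        simp only [hTdef, Finset.mem_filter, Finset.mem_univ, true_and, Finset.mem_image,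
          Finset.mem_erase]
        constructor
        · rintro ⟨⟨h1', h2', h3'⟩, h4'⟩
          exact ⟨p.1, ⟨h1', h4' ▸ h3'⟩, by rw [← h4']⟩
        · rintro ⟨y, ⟨hy1, hy2⟩, rfl⟩
          exact ⟨⟨hy1, hj, hy2⟩, rfl⟩
      rw [himg, Finset.card_image_of_injective _ (fun a b h => by simpa using h),
        Finset.card_erase_of_mem hj, hsz]
    have h3 : T.card = ∑ y ∈ Finset.univ.erase x, (T.filter fun p => p.1 = y).card := by
      apply Finset.card_eq_sum_card_fiberwise
      intro p hp
      simp only [hTdef, Finset.mem_coe, Finset.mem_filter, Finset.mem_univ, true_and] at hp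
      simp [hp.1]
    have h4 : ∀ y ∈ Finset.univ.erase x, (T.filter fun p => p.1 = y).card = lam := by
      intro y hy
      have hyx : y ≠ x := (Finset.mem_erase.mp hy).1
      have himg : (T.filter fun p => p.1 = y)
          = (Finset.univ.filter fun j => x ∈ Bl j ∧ y ∈ Bl j).image (fun j => (y, j)) := by
        ext p
        simp only [hTdef, Finset.mem_filter, Finset.mem_univ, true_and, Finset.mem_image]
        constructor
        · rintro ⟨⟨h1', h2', h3'⟩, h4'⟩
          exact ⟨p.2, ⟨h2', h4' ▸ h3'⟩, by rw [← h4']⟩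
        · rintro ⟨j, ⟨hj1, hj2⟩, rfl⟩
          exact ⟨⟨hyx, hj1, hj2⟩, rfl⟩
      rw [himg, Finset.card_image_of_injective _ (fun a b h => by simpa using h),
        hpair x y (Ne.symm hyx)]
    have h5 : S.card * (k - 1) = (k ^ 2 - 1) * lam := by
      have e1 : T.card = S.card * (k - 1) := by
        rw [h1, Finset.sum_congr rfl h2, Finset.sum_const, smul_eq_mul]
      have e2 : T.card = (k ^ 2 - 1) * lam := by
        rw [h3, Finset.sum_congr rfl h4, Finset.sum_const, smul_eq_mul,
          Finset.card_erase_of_mem (Finset.mem_univ x), Finset.card_univ, hv]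
      omega
    have hk1 : 0 < k - 1 := by omega
    have : S.card * (k - 1) = lam * (k + 1) * (k - 1) := by
      rw [h5]
      have : k ^ 2 - 1 = (k + 1) * (k - 1) := by
        have := Nat.sq_sub_sq k 1
        simpa using this
      rw [this]; ring
    exact Nat.eq_of_mul_eq_mul_right hk1 this
  -- every point is on a block
  have hblock : ∀ y : Pt, ∃ j, y ∈ Bl j := by
    intro y
    have hcard : 1 < Fintype.card Pt := by rw [hv]; nlinarith
    obtain ⟨z, hz⟩ := Fintype.exists_ne_of_one_lt_card hcard y
    have h := hpair y z (Ne.symm hz)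
    have hne : (Finset.univ.filter fun j => y ∈ Bl j ∧ z ∈ Bl j).Nonempty := by
      rw [← Finset.card_pos, h]; exact hlam
    obtain ⟨j, hj⟩ := hne
    exact ⟨j, (Finset.mem_filter.mp hj).2.1⟩
  -- orbit of x is everything
  have horb : MulAction.orbit G x = Set.univ := by
    ext y
    simp only [Set.mem_univ, iff_true, MulAction.mem_orbit_iff]
    obtain ⟨j, hj⟩ := hblock y
    obtain ⟨g, hg1, _⟩ := hflag x i hxB y j hj
    exact ⟨g, hg1⟩
  have hGx : Nat.card G = k ^ 2 * Nat.card (MulAction.stabilizer G x) := by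
    rw [← Subgroup.index_mul_card (MulAction.stabilizer G x),
      MulAction.index_stabilizer, horb, Set.ncard_univ, Nat.card_eq_fintype_card, hv]
  -- the orbit of i under the stabilizer of x
  have horb2 : MulAction.orbit (MulAction.stabilizer G x) i = (↑S : Set ι) := by
    ext j
    simp only [MulAction.mem_orbit_iff, hSdef, Finset.coe_filter, Finset.mem_univ, true_and,
      Set.mem_setOf_eq]
    constructor
    · rintro ⟨⟨g, hg⟩, rfl⟩
      have hmem := (hcompat g i x).mp hxB
      have hgx : g • x = x := hg
      rw [hgx] at hmem
      exact hmem
    · intro hj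
      obtain ⟨g, hg1, hg2⟩ := hflag x i hxB x j hj
      exact ⟨⟨g, hg1⟩, hg2⟩
  have hcard3 : Nat.card (MulAction.stabilizer (MulAction.stabilizer G x) i)
      = Nat.card ↥(MulAction.stabilizer G x ⊓ MulAction.stabilizer G i) := by
    apply Nat.card_congr
    refine ⟨fun g => ⟨g.1.1, g.1.2, g.2⟩, fun g => ⟨⟨g.1, g.2.1⟩, g.2.2⟩, ?_, ?_⟩
    · intro g; rfl
    · intro g; rfl
  have hGx2 : Nat.card (MulAction.stabilizer G x) =
      lam * (k + 1) * Nat.card ↥(MulAction.stabilizer G x ⊓ MulAction.stabilizer G i) := by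
    rw [← Subgroup.index_mul_card (MulAction.stabilizer (MulAction.stabilizer G x) i),
      MulAction.index_stabilizer, horb2, Set.ncard_coe_finset, hr, hcard3]
  refine ⟨hGx, hGx2, ?_⟩
  have hm : 0 < Nat.card ↥(MulAction.stabilizer G x ⊓ MulAction.stabilizer G i) :=
    Nat.card_pos
  set m := Nat.card ↥(MulAction.stabilizer G x ⊓ MulAction.stabilizer G i)
  rw [hGx, hGx2]
  set L := lam * (k + 1) * m with hLdef
  have hLpos : 0 < L := by positivity
  have hL1 : k + 1 ≤ L := by
    calc k + 1 = 1 * (k + 1) * 1 := by ring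
      _ ≤ lam * (k + 1) * m := Nat.mul_le_mul (Nat.mul_le_mul hlam le_rfl) hm
  calc k ^ 2 * L < (k + 1) ^ 2 * L :=
        (Nat.mul_lt_mul_right hLpos).mpr (Nat.pow_lt_pow_left (Nat.lt_succ_self k) (by norm_num))
    _ ≤ L ^ 2 * L := Nat.mul_le_mul_right _ (Nat.pow_le_pow_left hL1 2)
    _ = L ^ 3 := by ring
end

section
/- Let D be a 2-(k²,k,λ) design with λ | k admitting a flag-transitive automorphism group G with simple socle X. For any point x and any point y ≠ x, the integer (k+1)/gcd(k+1, |Out(X)|) divides |y^{X_x}| and hence divides |X_x|. -/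
open MulAction Subgroup Finset

lemma aux_orbit_normal {G : Type*} [Group G] [Finite G] {Pt : Type*} [MulAction G Pt]
    (N : Subgroup G) [N.Normal] (y : Pt) :
    ∃ e : ℕ, e ∣ N.index ∧ (orbit G y).ncard = e * (orbit N y).ncard := by
  set S := stabilizer G y with hS
  have hstab : stabilizer ↥N y = S.subgroupOf N := by
    ext n
    simp [Subgroup.mem_subgroupOf, MulAction.mem_stabilizer_iff, Subgroup.smul_def, hS]
  have horbN : (orbit ↥N y).ncard = S.relIndex N := by
    rw [← MulAction.index_stabilizer, hstab]; rfl
  have horbG : (orbit G y).ncard = S.index := (MulAction.index_stabilizer G y).symm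
  refine ⟨(S ⊔ N).index, Subgroup.index_dvd_of_le le_sup_right, ?_⟩
  have e1 : (S ⊓ N).relIndex S * S.index = (S ⊓ N).index :=
    Subgroup.relIndex_mul_index inf_le_left
  have e2 : (S ⊓ N).relIndex N * N.index = (S ⊓ N).index :=
    Subgroup.relIndex_mul_index inf_le_right
  have e3 : (S ⊓ N).relIndex S = N.relIndex S := by
    rw [inf_comm, Subgroup.inf_relIndex_right]
  have e4 : N.relIndex (S ⊔ N) = N.relIndex S := Subgroup.relIndex_sup_right S N
  have e5 : N.relIndex (S ⊔ N) * (S ⊔ N).index = N.index :=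
    Subgroup.relIndex_mul_index le_sup_right
  have e6 : (S ⊓ N).relIndex N = S.relIndex N := Subgroup.inf_relIndex_right S N
  have ht : N.relIndex S ≠ 0 := Subgroup.index_ne_zero_of_finite
  have key : N.relIndex S * S.index = N.relIndex S * ((S ⊔ N).index * S.relIndex N) := by
    rw [e3] at e1
    rw [e6] at e2
    rw [e4] at e5
    rw [e1, ← e2, ← e5]
    ring
  have := Nat.eq_of_mul_eq_mul_left (Nat.pos_of_ne_zero ht) key
  rw [horbG, horbN, this]

lemma aux_conj_range_normal (M : Type*) [Group M] :
    ((MulAut.conj : M →* MulAut M).range).Normal := by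
  constructor
  rintro - ⟨n, rfl⟩ f
  refine ⟨f n, ?_⟩
  ext h
  simp [MulAut.conj_apply, MulAut.mul_apply, MulAut.inv_def, mul_assoc]

lemma aux_index_dvd_out {G : Type*} [Group G] [Finite G] (X : Subgroup G) [X.Normal]
    (hcent : Subgroup.centralizer (X : Set G) = ⊥) :
    X.index ∣ Nat.card (MulAut ↥X ⧸ (MulAut.conj : ↥X →* MulAut ↥X).range) := by
  classical
  have : ((MulAut.conj : ↥X →* MulAut ↥X).range).Normal := aux_conj_range_normal ↥X
  let φ : G →* (MulAut ↥X ⧸ (MulAut.conj : ↥X →* MulAut ↥X).range) :=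
    (QuotientGroup.mk' _).comp MulAut.conjNormal
  have hker : φ.ker = X := by
    ext g
    simp only [φ, MonoidHom.mem_ker, MonoidHom.comp_apply, QuotientGroup.mk'_apply,
      QuotientGroup.eq_one_iff, MonoidHom.mem_range]
    constructor
    · rintro ⟨n, hn⟩
      have hc : (↑n)⁻¹ * g ∈ Subgroup.centralizer (X : Set G) := by
        rw [Subgroup.mem_centralizer_iff]
        intro h hh
        have h1 : ((MulAut.conj n ⟨h, hh⟩ : ↥X) : G) = ↑n * h * (↑n)⁻¹ := by
          simp [MulAut.conj_apply]
        have h2 : ((MulAut.conjNormal g ⟨h, hh⟩ : ↥X) : G) = g * h * g⁻¹ :=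
          MulAut.conjNormal_apply g ⟨h, hh⟩
        rw [hn] at h1
        rw [h2] at h1
        have : h * ((↑n)⁻¹ * g) = ((↑n)⁻¹ * g) * h := by
          have := congrArg (fun z => (↑n : G)⁻¹ * z * g) h1
          simpa [mul_assoc] using this.symm
        exact this
      rw [hcent, Subgroup.mem_bot] at hc
      have hg : g = ↑n := by
        have := congrArg (fun z => (↑n : G) * z) hc
        simpa using this
      rw [hg]; exact n.2
    · intro hg
      refine ⟨⟨g, hg⟩, ?_⟩
      ext h
      simp [MulAut.conj_apply, MulAut.conjNormal_apply, Subtype.ext_iff]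
  have hX : X.index = Nat.card φ.range :=
    (congrArg Subgroup.index hker).symm.trans (Subgroup.index_ker φ)
  rw [hX]
  exact Subgroup.card_subgroup_dvd_card _



/-- Let `D` be a `2-(k²,k,λ)` design with `λ ∣ k` admitting a flag-transitive
automorphism group `G` with simple socle `X` (so `X ⊴ G` is simple with trivial
centralizer in `G`).  For any point `x` and any point `y ≠ x`, the integer
`(k+1)/gcd(k+1, |Out(X)|)` divides `|y^{X_x}|` and hence divides `|X_x|`. -/
theorem stmt_3 {Pt ι : Type*} [Fintype Pt] [Fintype ι] [DecidableEq Pt]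
    (k lam : ℕ) (Bl : ι → Finset Pt)
    (G : Type*) [Group G] [Finite G] [MulAction G Pt] [MulAction G ι]
    (hk : 2 < k) (hlam : 0 < lam) (hdvd : lam ∣ k)
    (hv : Fintype.card Pt = k ^ 2)
    (hsz : ∀ i, (Bl i).card = k)
    (hpair : ∀ x y : Pt, x ≠ y →
      (Finset.univ.filter fun i => x ∈ Bl i ∧ y ∈ Bl i).card = lam)
    (hcompat : ∀ (g : G) (i : ι) (x : Pt), x ∈ Bl i ↔ g • x ∈ Bl (g • i))
    (hflag : ∀ (x : Pt) (i : ι), x ∈ Bl i → ∀ (y : Pt) (j : ι), y ∈ Bl j →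
      ∃ g : G, g • x = y ∧ g • i = j)
    (X : Subgroup G) (hnorm : X.Normal) (hsimple : IsSimpleGroup X)
    (hcent : Subgroup.centralizer (X : Set G) = ⊥)
    (x y : Pt) (hyx : y ≠ x) :
    ((k + 1) / Nat.gcd (k + 1)
        (Nat.card (MulAut ↥X ⧸ (MulAut.conj : ↥X →* MulAut ↥X).range))) ∣
      (MulAction.orbit (MulAction.stabilizer ↥X x) y).ncard ∧
    ((k + 1) / Nat.gcd (k + 1)
        (Nat.card (MulAut ↥X ⧸ (MulAut.conj : ↥X →* MulAut ↥X).range))) ∣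
      Nat.card (MulAction.stabilizer ↥X x) := by
  classical
  haveI := hnorm
  set n := Nat.card (MulAut ↥X ⧸ (MulAut.conj : ↥X →* MulAut ↥X).range) with hn
  set H := MulAction.stabilizer G x with hH
  -- the finset of the G_x-orbit of y
  set Of := (Set.toFinite (MulAction.orbit ↥H y)).toFinset with hOfdef
  have hmemOf : ∀ z : Pt, z ∈ Of ↔ z ∈ MulAction.orbit ↥H y := fun z =>
    Set.Finite.mem_toFinset _
  have hcardOf : (MulAction.orbit ↥H y).ncard = Of.card :=
    Set.ncard_eq_toFinset_card _ _
  have hOfx : ∀ z ∈ Of, x ≠ z := by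
    intro z hz hxz
    obtain ⟨g, rfl⟩ := (hmemOf z).mp hz
    apply hyx
    have hgx : (g : G) • x = x := g.2
    have hgy : (g : G) • y = x := by
      rw [hxz]; rfl
    have : (g : G) • y = (g : G) • x := by rw [hgy, hgx]
    exact MulAction.injective (g : G) this
  -- blocks through x
  set Bx := Finset.univ.filter (fun i => x ∈ Bl i) with hBxdef
  have hdc : ∀ t : Finset Pt, ∑ i ∈ Bx, (t.filter (· ∈ Bl i)).card
      = ∑ z ∈ t, (Bx.filter (fun i => z ∈ Bl i)).card := by
    intro t
    simp_rw [Finset.card_filter]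
    exact Finset.sum_comm
  have hzfil : ∀ z : Pt, z ≠ x → (Bx.filter (fun i => z ∈ Bl i)).card = lam := by
    intro z hz
    rw [hBxdef, Finset.filter_filter]
    exact hpair x z (Ne.symm hz)
  -- number of blocks through x is lam * (k+1)
  have hBxcard : Bx.card = lam * (k + 1) := by
    have hL : ∑ i ∈ Bx, ((Finset.univ.erase x).filter (· ∈ Bl i)).card
        = Bx.card * (k - 1) := by
      rw [Finset.sum_congr rfl (fun i hi => ?_), Finset.sum_const, smul_eq_mul]
      have hxi : x ∈ Bl i := (Finset.mem_filter.mp hi).2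
      have : (Finset.univ.erase x).filter (· ∈ Bl i) = (Bl i).erase x := by
        ext z
        simp [Finset.mem_erase, and_comm]
      rw [this, Finset.card_erase_of_mem hxi, hsz]
    have hR : ∑ z ∈ Finset.univ.erase x, (Bx.filter (fun i => z ∈ Bl i)).card
        = (k ^ 2 - 1) * lam := by
      rw [Finset.sum_congr rfl (fun z hz => hzfil z (Finset.mem_erase.mp hz).1),
        Finset.sum_const, smul_eq_mul, Finset.card_erase_of_mem (Finset.mem_univ x),
        Finset.card_univ, hv]
    have heq : Bx.card * (k - 1) = (k ^ 2 - 1) * lam := by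
      rw [← hL, ← hR]
      exact hdc _
    obtain ⟨m, rfl⟩ : ∃ m, k = m + 1 := ⟨k - 1, by omega⟩
    have hsq : (m + 1) ^ 2 = (m + 2) * m + 1 := by ring
    have heq2 : Bx.card * m = (m + 2) * m * lam := by
      simpa [hsq] using heq
    have hm : 0 < m := by omega
    have : Bx.card * m = lam * (m + 1 + 1) * m := by rw [heq2]; ring
    exact Nat.eq_of_mul_eq_mul_right hm this
  have hBxne : Bx.Nonempty := by
    rw [← Finset.card_pos, hBxcard]
    positivity
  obtain ⟨i₀, hi₀⟩ := hBxne
  set m := (Of.filter (· ∈ Bl i₀)).card with hm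
  have hconst : ∀ i ∈ Bx, (Of.filter (· ∈ Bl i)).card = m := by
    intro i hi
    have hxi₀ : x ∈ Bl i₀ := (Finset.mem_filter.mp hi₀).2
    have hxi : x ∈ Bl i := (Finset.mem_filter.mp hi).2
    obtain ⟨g, hgx, hgi⟩ := hflag x i₀ hxi₀ x i hxi
    rw [hm]
    refine (Finset.card_bij (fun z _ => g • z) ?_ ?_ ?_).symm
    · intro z hz
      obtain ⟨hzO, hzB⟩ := Finset.mem_filter.mp hz
      refine Finset.mem_filter.mpr ⟨?_, ?_⟩
      · rw [hmemOf] at hzO ⊢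
        obtain ⟨h, rfl⟩ := hzO
        refine ⟨(⟨g, hgx⟩ : ↥H) * h, ?_⟩
        show ((⟨g, hgx⟩ : ↥H) * h : ↥H) • y = g • ((h : ↥H) • y)
        rw [Subgroup.smul_def, Subgroup.smul_def, Subgroup.coe_mul, mul_smul]
      · rw [← hgi]
        exact (hcompat g i₀ z).mp hzB
    · intro a _ b _ hab
      exact MulAction.injective g hab
    · intro w hw
      obtain ⟨hwO, hwB⟩ := Finset.mem_filter.mp hw
      refine ⟨g⁻¹ • w, Finset.mem_filter.mpr ⟨?_, ?_⟩, smul_inv_smul g w⟩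
      · rw [hmemOf] at hwO ⊢
        obtain ⟨h, rfl⟩ := hwO
        have hgx' : g⁻¹ • x = x := by
          conv_lhs => rw [← hgx]
          exact inv_smul_smul g x
        refine ⟨(⟨g⁻¹, hgx'⟩ : ↥H) * h, ?_⟩
        show ((⟨g⁻¹, hgx'⟩ : ↥H) * h : ↥H) • y = g⁻¹ • ((h : ↥H) • y)
        rw [Subgroup.smul_def, Subgroup.smul_def, Subgroup.coe_mul, mul_smul]
      · have := (hcompat g i₀ (g⁻¹ • w)).mpr
        rw [smul_inv_smul, hgi] at this
        exact this hwB
  have horbcount : lam * Of.card = lam * ((k + 1) * m) := by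
    have h1 : ∑ i ∈ Bx, (Of.filter (· ∈ Bl i)).card = Bx.card * m := by
      rw [Finset.sum_congr rfl hconst, Finset.sum_const, smul_eq_mul]
    have h2 : ∑ z ∈ Of, (Bx.filter (fun i => z ∈ Bl i)).card = Of.card * lam := by
      rw [Finset.sum_congr rfl (fun z hz => hzfil z (Ne.symm (hOfx z hz))),
        Finset.sum_const, smul_eq_mul]
    have := hdc Of
    rw [h1, h2, hBxcard] at this
    rw [mul_comm lam Of.card, ← this, mul_assoc]
  have hOfcard : Of.card = (k + 1) * m := Nat.eq_of_mul_eq_mul_left hlam horbcount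
  have hdvd1 : (k + 1) ∣ Of.card := ⟨m, hOfcard⟩
  -- group theory: relate to X_x-orbit
  obtain ⟨e, he, horb⟩ := aux_orbit_normal (X.subgroupOf H) y
  have hseteq : MulAction.orbit ↥(X.subgroupOf H) y
      = MulAction.orbit ↥(MulAction.stabilizer ↥X x) y := by
    ext z
    constructor
    · rintro ⟨g, rfl⟩
      have hgX : ((g : ↥H) : G) ∈ X := g.2
      have hgH : ((g : ↥H) : G) • x = x := (g : ↥H).2
      have hmem : (⟨((g : ↥H) : G), hgX⟩ : ↥X) ∈ MulAction.stabilizer ↥X x := by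
        show (⟨((g : ↥H) : G), hgX⟩ : ↥X) • x = x
        rw [Subgroup.smul_def]
        exact hgH
      exact ⟨⟨⟨((g : ↥H) : G), hgX⟩, hmem⟩, rfl⟩
    · rintro ⟨g, rfl⟩
      have hgH : ((g : ↥X) : G) ∈ H := by
        have := g.2
        rw [MulAction.mem_stabilizer_iff, Subgroup.smul_def] at this
        exact this
      have hgX : (⟨((g : ↥X) : G), hgH⟩ : ↥H) ∈ X.subgroupOf H := g.1.2
      exact ⟨⟨⟨((g : ↥X) : G), hgH⟩, hgX⟩, rfl⟩
  set B := (MulAction.orbit ↥(MulAction.stabilizer ↥X x) y).ncard with hB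
  have horb' : Of.card = e * B := by
    rw [← hcardOf, horb, hseteq]
  -- e divides n
  have hen : e ∣ n := by
    refine he.trans (dvd_trans ?_ (aux_index_dvd_out X hcent))
    have : (X.subgroupOf H).index = X.relIndex H := rfl
    rw [this]
    exact Subgroup.relIndex_dvd_index_of_normal X H
  have hkn : (k + 1) ∣ n * B := by
    rw [horb'] at hdvd1
    exact hdvd1.trans (mul_dvd_mul_right hen B)
  -- finish
  have hnpos : 0 < n := Nat.card_pos
  have hfinal : (k + 1) / Nat.gcd (k + 1) n ∣ B := by
    set gd := Nat.gcd (k + 1) n with hgd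
    have hgdpos : 0 < gd := Nat.gcd_pos_of_pos_left _ (by omega)
    have hco : Nat.Coprime ((k + 1) / gd) (n / gd) := Nat.coprime_div_gcd_div_gcd hgdpos
    have h3 : gd * ((k + 1) / gd) ∣ gd * ((n / gd) * B) := by
      rw [Nat.mul_div_cancel' (Nat.gcd_dvd_left _ _), ← mul_assoc,
        Nat.mul_div_cancel' (Nat.gcd_dvd_right _ _)]
      exact hkn
    have h2 : (k + 1) / gd ∣ (n / gd) * B :=
      (mul_dvd_mul_iff_left (by omega : gd ≠ 0)).mp h3
    exact hco.dvd_of_dvd_mul_left h2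
  refine ⟨hfinal, hfinal.trans ?_⟩
  have : B = (MulAction.stabilizer ↥(MulAction.stabilizer ↥X x) y).index :=
    (MulAction.index_stabilizer _ _).symm
  rw [this]
  exact Subgroup.index_dvd_card _
end

section
/- The only integer q > 1 for which q⁴ + q³ + q² + q + 1 is a perfect square is q = 3 (where it equals 121 = 11²). -/
/-- The only integer `q > 1` for which `q⁴ + q³ + q² + q + 1` is a perfect square is
`q = 3`, where it equals `121 = 11²`. -/
theorem stmt_7 :
    (∀ q : ℕ, 1 < q → (∃ z : ℕ, z ^ 2 = q ^ 4 + q ^ 3 + q ^ 2 + q + 1) → q = 3) ∧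
    3 ^ 4 + 3 ^ 3 + 3 ^ 2 + 3 + 1 = 11 ^ 2 := by
  constructor
  · rintro q hq ⟨z, hz⟩
    by_cases h4 : q ≤ 3
    · interval_cases q
      · -- q = 2 : z ^ 2 = 31, impossible
        exfalso
        have hz6 : z < 6 := by nlinarith
        interval_cases z <;> omega
      · rfl
    · exfalso
      push_neg at h4
      have h1 : (2 * q ^ 2 + q) ^ 2 < (2 * z) ^ 2 := by nlinarith
      have h2 : 2 * q ^ 2 + q < 2 * z := by
        exact lt_of_pow_lt_pow_left₀ 2 (Nat.zero_le _) h1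
      have h3 : 2 * q ^ 2 + q + 1 ≤ 2 * z := h2
      have h5 : (2 * q ^ 2 + q + 1) ^ 2 ≤ (2 * z) ^ 2 :=
        Nat.pow_le_pow_left h3 2
      nlinarith
  · norm_num
end

section
/- Let G act flag-transitively on a 2-(k²,k,λ) design with λ | k and let p be a prime dividing k. Then |G|_p = λ_p·k_p²·|G_{x,B}|_p for any flag (x,B), and consequently |G|_p ≤ |G_B|_p³, where G_B is a block stabilizer. -/
open Finset MulAction


/-- Let `G` act flag-transitively on a `2-(k²,k,λ)` design with `λ ∣ k` and let `p` be a
prime dividing `k`.  Then `|G|_p = λ_p·k_p²·|G_{x,B}|_p` for any flag `(x,B)`, and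
consequently `|G|_p ≤ |G_B|_p³` (stated via `p`-adic valuations). -/
theorem stmt_11 {Pt ι : Type*} [Fintype Pt] [Fintype ι] [DecidableEq Pt]
    (k lam : ℕ) (Bl : ι → Finset Pt)
    (G : Type*) [Group G] [Finite G] [MulAction G Pt] [MulAction G ι]
    (hk : 2 < k) (hlam : 0 < lam) (hdvd : lam ∣ k)
    (hv : Fintype.card Pt = k ^ 2)
    (hsz : ∀ i, (Bl i).card = k)
    (hpair : ∀ x y : Pt, x ≠ y →
      (Finset.univ.filter fun i => x ∈ Bl i ∧ y ∈ Bl i).card = lam)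
    (hcompat : ∀ (g : G) (i : ι) (x : Pt), x ∈ Bl i ↔ g • x ∈ Bl (g • i))
    (hflag : ∀ (x : Pt) (i : ι), x ∈ Bl i → ∀ (y : Pt) (j : ι), y ∈ Bl j →
      ∃ g : G, g • x = y ∧ g • i = j)
    (p : ℕ) (hp : p.Prime) (hpk : p ∣ k)
    (x : Pt) (i : ι) (hxB : x ∈ Bl i) :
    (Nat.card G).factorization p =
      lam.factorization p + 2 * k.factorization p +
        (Nat.card ↥(MulAction.stabilizer G x ⊓ MulAction.stabilizer G i)).factorization p ∧
    (Nat.card G).factorization p ≤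
      3 * (Nat.card (MulAction.stabilizer G i)).factorization p := by
  classical
  have hk0 : 0 < k := by omega
  set b := Fintype.card ι with hbdef
  -- double counting: b * (k*(k-1)) = lam * (k^2 * (k^2-1))
  have hcount : b * (k * k - k) = (k ^ 2 * k ^ 2 - k ^ 2) * lam := by
    have h1 : ∑ q ∈ (univ : Finset Pt).offDiag,
        (univ.filter fun j => q.1 ∈ Bl j ∧ q.2 ∈ Bl j).card
        = (k ^ 2 * k ^ 2 - k ^ 2) * lam := by
      rw [Finset.sum_congr rfl (fun q hq => hpair q.1 q.2 (Finset.mem_offDiag.1 hq).2.2)]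
      simp [Finset.offDiag_card, hv]
    have h2 : ∑ q ∈ (univ : Finset Pt).offDiag,
        (univ.filter fun j => q.1 ∈ Bl j ∧ q.2 ∈ Bl j).card
        = b * (k * k - k) := by
      calc ∑ q ∈ (univ : Finset Pt).offDiag,
            (univ.filter fun j => q.1 ∈ Bl j ∧ q.2 ∈ Bl j).card
          = ∑ q ∈ (univ : Finset Pt).offDiag, ∑ j : ι,
              (if q.1 ∈ Bl j ∧ q.2 ∈ Bl j then 1 else 0) := by
            simp only [Finset.card_filter]
        _ = ∑ j : ι, ∑ q ∈ (univ : Finset Pt).offDiag,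
              (if q.1 ∈ Bl j ∧ q.2 ∈ Bl j then 1 else 0) := Finset.sum_comm
        _ = ∑ j : ι, ((Bl j).offDiag).card := by
            refine Finset.sum_congr rfl fun j _ => ?_
            rw [← Finset.card_filter]
            congr 1
            ext q
            simp only [Finset.mem_filter, Finset.mem_offDiag, Finset.mem_univ, true_and]
            tauto
        _ = b * (k * k - k) := by
            simp [Finset.offDiag_card, hsz, Finset.card_univ, hbdef]
    omega
  have hb : b = lam * (k * (k + 1)) := by
    have hne : 0 < k * (k - 1) := by
      have : 1 ≤ k - 1 := by omega
      positivity
    have e1 : k * k - k = k * (k - 1) := by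
      rw [Nat.sub_eq_iff_eq_add (Nat.le_mul_of_pos_left k hk0)]
      cases k with
      | zero => simp
      | succ n => simp only [Nat.add_sub_cancel]; ring
    have e2 : k ^ 2 * k ^ 2 - k ^ 2 = k * (k + 1) * (k * (k - 1)) := by
      rw [Nat.sub_eq_iff_eq_add (Nat.le_mul_of_pos_left _ (by positivity))]
      cases k with
      | zero => simp
      | succ n => simp only [Nat.add_sub_cancel]; ring
    have key : b * (k * (k - 1)) = (lam * (k * (k + 1))) * (k * (k - 1)) := by
      calc b * (k * (k - 1)) = b * (k * k - k) := by rw [e1]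
        _ = (k ^ 2 * k ^ 2 - k ^ 2) * lam := hcount
        _ = (lam * (k * (k + 1))) * (k * (k - 1)) := by rw [e2]; ring
    exact Nat.eq_of_mul_eq_mul_right hne key
  -- flags
  set F : Finset (Pt × ι) := univ.filter fun q => q.1 ∈ Bl q.2 with hF
  have hFcard : F.card = b * k := by
    calc F.card = ∑ q : Pt × ι, (if q.1 ∈ Bl q.2 then 1 else 0) := by
          rw [hF, Finset.card_filter]
      _ = ∑ j : ι, ∑ y : Pt, (if y ∈ Bl j then 1 else 0) := by
          rw [Fintype.sum_prod_type_right]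
      _ = ∑ j : ι, (Bl j).card := by
          refine Finset.sum_congr rfl fun j _ => ?_
          rw [← Finset.card_filter]
          simp
      _ = b * k := by simp [hsz, Finset.card_univ, hbdef]
  -- orbit of the flag (x,i)
  have horbF : MulAction.orbit G ((x, i) : Pt × ι) = ↑F := by
    ext q
    simp only [MulAction.mem_orbit_iff, hF, Finset.coe_filter, Set.mem_setOf_eq,
      Finset.mem_univ, true_and]
    constructor
    · rintro ⟨g, rfl⟩
      exact (hcompat g i x).1 hxB
    · intro hq
      obtain ⟨g, hg1, hg2⟩ := hflag x i hxB q.1 q.2 hq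
      exact ⟨g, by simp [Prod.ext_iff, hg1, hg2]⟩
  have hstabF : MulAction.stabilizer G ((x, i) : Pt × ι)
      = MulAction.stabilizer G x ⊓ MulAction.stabilizer G i := by
    ext g
    simp [MulAction.mem_stabilizer_iff, Prod.ext_iff]
  have hOS1 : Nat.card G = (b * k) *
      Nat.card ↥(MulAction.stabilizer G x ⊓ MulAction.stabilizer G i) := by
    rw [← hstabF, ← Subgroup.index_mul_card (MulAction.stabilizer G ((x, i) : Pt × ι)),
      MulAction.index_stabilizer, horbF, Set.ncard_coe_finset, hFcard]
  -- orbit of the block i is everything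
  have horbB : MulAction.orbit G i = Set.univ := by
    ext j
    simp only [Set.mem_univ, iff_true, MulAction.mem_orbit_iff]
    obtain ⟨y, hy⟩ := Finset.card_pos.1 (by rw [hsz j]; omega : 0 < (Bl j).card)
    obtain ⟨g, _, hg2⟩ := hflag x i hxB y j hy
    exact ⟨g, hg2⟩
  have hOS2 : Nat.card G = b * Nat.card (MulAction.stabilizer G i) := by
    rw [← Subgroup.index_mul_card (MulAction.stabilizer G i),
      MulAction.index_stabilizer, horbB, Set.ncard_univ, Nat.card_eq_fintype_card]
  set S := Nat.card ↥(MulAction.stabilizer G x ⊓ MulAction.stabilizer G i) with hSdef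
  set T := Nat.card (MulAction.stabilizer G i) with hTdef
  have hS0 : 0 < S := Nat.card_pos
  have hb0 : 0 < b := by rw [hb]; positivity
  have hT : T = k * S := by
    have : b * T = b * (k * S) := by rw [← mul_assoc, ← hOS1, hOS2]
    exact Nat.eq_of_mul_eq_mul_left hb0 this
  have hGcard : Nat.card G = lam * (k * (k + 1)) * k * S := by rw [hOS1, hb]
  have hk1 : (k + 1).factorization p = 0 := by
    apply Nat.factorization_eq_zero_of_not_dvd
    intro h
    have h1 : p ∣ 1 := by
      have := Nat.dvd_sub h hpk
      simpa using this
    exact absurd (Nat.dvd_one.mp h1) hp.one_lt.ne'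
  have hfact : (Nat.card G).factorization p =
      lam.factorization p + 2 * k.factorization p + S.factorization p := by
    rw [hGcard]
    rw [Nat.factorization_mul (by positivity) hS0.ne',
        Nat.factorization_mul (by positivity) hk0.ne',
        Nat.factorization_mul hlam.ne' (by positivity),
        Nat.factorization_mul hk0.ne' (by positivity)]
    simp only [Finsupp.coe_add, Pi.add_apply, hk1]
    ring
  refine ⟨hfact, ?_⟩
  have hlamk : lam.factorization p ≤ k.factorization p :=
    (Nat.factorization_le_iff_dvd hlam.ne' hk0.ne').2 hdvd p
  have hTfact : T.factorization p = k.factorization p + S.factorization p := by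
    rw [hT, Nat.factorization_mul hk0.ne' hS0.ne']; simp
  rw [hfact, hTfact]
  omega
end

section
/- Let G act flag-transitively on a 2-(k²,k,λ) design with λ | k, where λ|G_{x,B}| is odd for some flag (x,B). Then k is even. -/
lemma aux_invol {α : Type*} [DecidableEq α] (s : Finset α) (f : α → α)
    (hmem : ∀ a ∈ s, f a ∈ s) (hinv : ∀ a ∈ s, f (f a) = a) (hodd : Odd s.card) :
    ∃ a ∈ s, f a = a := by
  by_contra h
  push_neg at h
  have h1 := Finset.prod_involution (s := s) (f := fun _ => (-1 : ℤ))
    (fun a _ => f a) (by norm_num) (fun a ha _ => h a ha) hmem hinv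
  rw [Finset.prod_const] at h1
  rw [Odd.neg_one_pow hodd] at h1
  norm_num at h1

/-- Let `G` act (faithfully) flag-transitively on a `2-(k²,k,λ)` design with `λ ∣ k`,
where `G` has even order and `λ·|G_{x,B}|` is odd for some flag `(x,B)`.
Then `k` is even. -/
theorem stmt_13 {Pt ι : Type*} [Fintype Pt] [Fintype ι] [DecidableEq Pt]
    (k lam : ℕ) (Bl : ι → Finset Pt)
    (G : Type*) [Group G] [Finite G] [MulAction G Pt] [MulAction G ι]
    [FaithfulSMul G Pt]
    (hk : 2 < k) (hlam : 0 < lam) (hdvd : lam ∣ k)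
    (hv : Fintype.card Pt = k ^ 2)
    (hsz : ∀ i, (Bl i).card = k)
    (hpair : ∀ x y : Pt, x ≠ y →
      (Finset.univ.filter fun i => x ∈ Bl i ∧ y ∈ Bl i).card = lam)
    (hcompat : ∀ (g : G) (i : ι) (x : Pt), x ∈ Bl i ↔ g • x ∈ Bl (g • i))
    (hflag : ∀ (x : Pt) (i : ι), x ∈ Bl i → ∀ (y : Pt) (j : ι), y ∈ Bl j →
      ∃ g : G, g • x = y ∧ g • i = j)
    (heven : Even (Nat.card G))
    (x : Pt) (i : ι) (hxB : x ∈ Bl i)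
    (hodd : Odd (lam *
      Nat.card ↥(MulAction.stabilizer G x ⊓ MulAction.stabilizer G i))) :
    Even k := by
  classical
  have := Fintype.ofFinite G
  obtain ⟨hlamodd, hmodd⟩ := (Nat.odd_mul).mp hodd
  -- get an involution σ
  have h2 : (2 : ℕ) ∣ Fintype.card G := by
    rw [← Nat.card_eq_fintype_card]; exact heven.two_dvd
  obtain ⟨σ, hσ⟩ := exists_prime_orderOf_dvd_card 2 h2
  have hσne : σ ≠ 1 := by
    intro h; rw [h, orderOf_one] at hσ; norm_num at hσ
  have hσsq : σ * σ = 1 := by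
    have := pow_orderOf_eq_one σ; rwa [hσ, sq] at this
  -- σ moves some point y
  have hmove : ∃ y : Pt, σ • y ≠ y := by
    by_contra h
    push_neg at h
    exact hσne (FaithfulSMul.eq_of_smul_eq_smul (fun a => by rw [h a, one_smul]))
  obtain ⟨y, hy⟩ := hmove
  have hσσ : ∀ a : Pt, σ • σ • a = a := fun a => by
    rw [smul_smul, hσsq, one_smul]
  have hσσι : ∀ j : ι, σ • σ • j = j := fun j => by
    rw [smul_smul, hσsq, one_smul]
  -- the blocks through {y, σy}
  set S : Finset ι := Finset.univ.filter fun j => y ∈ Bl j ∧ σ • y ∈ Bl j with hS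
  have hScard : S.card = lam := hpair y (σ • y) (Ne.symm hy)
  have hmemS : ∀ j ∈ S, σ • j ∈ S := by
    intro j hj
    rw [hS, Finset.mem_filter] at hj ⊢
    refine ⟨Finset.mem_univ _, ?_, ?_⟩
    · have := (hcompat σ j (σ • y)).mp hj.2.2
      rwa [hσσ] at this
    · exact (hcompat σ j y).mp hj.2.1
  have hinvS : ∀ j ∈ S, σ • σ • j = j := fun j _ => hσσι j
  obtain ⟨C, hCS, hσC⟩ := aux_invol S (fun j => σ • j) hmemS hinvS (hScard ▸ hlamodd)
  rw [hS, Finset.mem_filter] at hCS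
  have hyC : y ∈ Bl C := hCS.2.1
  -- σ is in the stabilizer of C
  set H := MulAction.stabilizer G C with hH
  have hσH : σ ∈ H := hσC
  have h2H : (2 : ℕ) ∣ Nat.card H := by
    have := Subgroup.orderOf_dvd_natCard H hσH
    rwa [hσ] at this
  -- orbit of y under H is Bl C
  have horb : MulAction.orbit H y = ↑(Bl C) := by
    ext w
    constructor
    · rintro ⟨⟨g, hg⟩, rfl⟩
      have : g • y ∈ Bl (g • C) := (hcompat g C y).mp hyC
      rwa [hg] at this
    · intro hw
      obtain ⟨g, hgy, hgC⟩ := hflag y C hyC w C hw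
      exact ⟨⟨g, hgC⟩, hgy⟩
  have hcorb : Nat.card (MulAction.orbit H y) = k := by
    rw [horb]
    simp [Nat.card_eq_fintype_card, hsz C]
  -- stabilizer of y in H
  have hstabequiv : (MulAction.stabilizer H y) ≃
      ↥(MulAction.stabilizer G y ⊓ H) := by
    refine ⟨fun g => ⟨(g : H), ⟨g.2, (g : H).2⟩⟩, fun g => ⟨⟨g, g.2.2⟩, g.2.1⟩, ?_, ?_⟩
    · intro g; rfl
    · intro g; rfl
  -- orbit-stabilizer
  have hos : Nat.card H = k * Nat.card (MulAction.stabilizer H y) := by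
    have := MulAction.card_orbit_mul_card_stabilizer_eq_card_group H y
    rw [← Nat.card_eq_fintype_card, ← Nat.card_eq_fintype_card,
      ← Nat.card_eq_fintype_card, hcorb] at this
    omega
  -- conjugation: card (stab y ⊓ stab C) = card (stab x ⊓ stab i)
  obtain ⟨g₀, hg₀x, hg₀i⟩ := hflag x i hxB y C hyC
  have hconj : MulAction.stabilizer G y ⊓ H =
      Subgroup.map (MulAut.conj g₀).toMonoidHom
        (MulAction.stabilizer G x ⊓ MulAction.stabilizer G i) := by
    rw [Subgroup.map_inf _ _ _ (MulAut.conj g₀).injective, hH,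
      ← MulAction.stabilizer_smul_eq_stabilizer_map_conj g₀ x,
      ← MulAction.stabilizer_smul_eq_stabilizer_map_conj g₀ i, hg₀x, hg₀i]
  have hcardconj : Nat.card ↥(MulAction.stabilizer G y ⊓ H) =
      Nat.card ↥(MulAction.stabilizer G x ⊓ MulAction.stabilizer G i) := by
    rw [hconj]
    exact (Nat.card_congr (Subgroup.equivMapOfInjective _ _
      (MulAut.conj g₀).injective).toEquiv.symm)
  -- conclude
  have hm : Odd (Nat.card (MulAction.stabilizer H y)) := by
    rw [Nat.card_congr hstabequiv, hcardconj]; exact hmodd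
  rw [hos] at h2H
  rcases (Nat.Prime.dvd_mul Nat.prime_two).mp h2H with h | h
  · exact (even_iff_two_dvd).mpr h
  · exact absurd ((even_iff_two_dvd).mpr h) (Nat.not_even_iff_odd.mpr hm)
end

section
/- Let P = ⟨η, ψ⟩ ≤ PSL₃(3) where η and ψ are the images of the matrices ((1,1,−1),(0,1,1),(1,1,0)) and ((1,1,−1),(0,1,−1),(0,0,1)) over GF(3). Then P is a Frobenius group of order 39 with kernel ⟨η⟩ of order 13 and complement ⟨ψ⟩ of order 3. -/
set_option maxHeartbeats 1000000

/-- `PSL₃(3) = SL₃(3)`, since `gcd(3, 3−1) = 1`. -/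
abbrev G3 := Matrix.SpecialLinearGroup (Fin 3) (ZMod 3)

instance instDecEqG3 : DecidableEq G3 := fun A B =>
  decidable_of_iff (A.1 = B.1) Subtype.ext_iff.symm

/-- The element `η` of `PSL₃(3)`. -/
def etaM : G3 := ⟨!![1,1,-1;0,1,1;1,1,0], by decide⟩

/-- The element `ψ` of `PSL₃(3)`. -/
def psiM : G3 := ⟨!![1,1,-1;0,1,-1;0,0,1], by decide⟩

theorem orderEta : orderOf etaM = 13 :=
  haveI : Fact (Nat.Prime 13) := ⟨by norm_num⟩
  orderOf_eq_prime (by decide) (by decide)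

theorem orderPsi : orderOf psiM = 3 :=
  haveI : Fact (Nat.Prime 3) := ⟨by norm_num⟩
  orderOf_eq_prime (by decide) (by decide)

theorem cardK : Nat.card (Subgroup.closure {etaM} : Subgroup G3) = 13 := by
  rw [← Subgroup.zpowers_eq_closure, Nat.card_zpowers, orderEta]

theorem cardH : Nat.card (Subgroup.closure {psiM} : Subgroup G3) = 3 := by
  rw [← Subgroup.zpowers_eq_closure, Nat.card_zpowers, orderPsi]

theorem conj_mem_zp (g : G3) (k : ℕ) (hg : g * etaM * g⁻¹ = etaM ^ k) :
    ∀ h ∈ Subgroup.zpowers etaM, g * h * g⁻¹ ∈ Subgroup.zpowers etaM := by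
  intro h hh
  obtain ⟨n, rfl⟩ := mem_powers_iff_mem_zpowers.2 hh
  rw [← conj_pow, hg, ← pow_mul]
  exact Subgroup.pow_mem _ (Subgroup.mem_zpowers _) _

theorem psiNorm : psiM ∈ Subgroup.normalizer ((Subgroup.zpowers etaM : Subgroup G3) : Set G3) := by
  rw [Subgroup.mem_normalizer_iff]
  intro h
  constructor
  · exact conj_mem_zp psiM 3 (by decide) h
  · intro hh
    have := conj_mem_zp psiM⁻¹ 9 (by decide) _ hh
    simpa [mul_assoc] using this

theorem Ple : Subgroup.closure {etaM, psiM} ≤ Subgroup.normalizer ((Subgroup.closure {etaM} : Subgroup G3) : Set G3) := by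
  rw [← Subgroup.zpowers_eq_closure, Subgroup.closure_le]
  rintro x (rfl | rfl)
  · exact Subgroup.le_normalizer (Subgroup.mem_zpowers _)
  · exact psiNorm

theorem part4 : ∀ g ∈ Subgroup.closure {etaM, psiM}, ∀ x ∈ Subgroup.closure {etaM},
    g * x * g⁻¹ ∈ (Subgroup.closure {etaM} : Subgroup G3) := fun g hg x hx =>
  (Subgroup.mem_normalizer_iff.1 (Ple hg) x).1 hx

theorem supP : Subgroup.closure {etaM} ⊔ Subgroup.closure {psiM} =
    (Subgroup.closure {etaM, psiM} : Subgroup G3) := by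
  rw [← Subgroup.closure_union, Set.singleton_union]

theorem infBot : Subgroup.closure {etaM} ⊓ Subgroup.closure {psiM} = (⊥ : Subgroup G3) :=
  Subgroup.inf_eq_bot_of_coprime (by rw [cardK, cardH]; norm_num)

theorem cardP : Nat.card (Subgroup.closure {etaM, psiM} : Subgroup G3) = 39 := by
  set P : Subgroup G3 := Subgroup.closure {etaM, psiM} with hP
  have hK : Subgroup.closure {etaM} ≤ P :=
    Subgroup.closure_mono (by simp [Set.singleton_subset_iff])
  have hH : Subgroup.closure {psiM} ≤ P :=
    Subgroup.closure_mono (by simp [Set.singleton_subset_iff])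
  set K' := (Subgroup.closure {etaM}).subgroupOf P with hK'
  set H' := (Subgroup.closure {psiM}).subgroupOf P with hH'
  have cK' : Nat.card K' = 13 := by
    rw [hK', Nat.card_congr (Subgroup.subgroupOfEquivOfLe hK).toEquiv, cardK]
  have cH' : Nat.card H' = 3 := by
    rw [hH', Nat.card_congr (Subgroup.subgroupOfEquivOfLe hH).toEquiv, cardH]
  have hnorm : K'.Normal := by
    constructor
    intro n hn g
    exact part4 g.1 g.2 n.1 hn
  have hsup : H' ⊔ K' = ⊤ := by
    rw [hK', hH', sup_comm, ← Subgroup.subgroupOf_sup hK hH, supP, Subgroup.subgroupOf_self]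
  have hdisj : Disjoint H' K' := by
    rw [Subgroup.disjoint_def]
    intro x hxH hxK
    have hmem : (x : G3) ∈ Subgroup.closure {etaM} ⊓ Subgroup.closure {psiM} := ⟨hxK, hxH⟩
    rw [infBot] at hmem
    exact Subtype.ext (by simpa using hmem)
  have hcompl : Subgroup.IsComplement' H' K' := by
    apply Subgroup.isComplement'_of_disjoint_and_mul_eq_univ hdisj
    rw [← Subgroup.mul_normal H' K', hsup]
    simp
  have := hcompl.card_mul
  rw [cK', cH'] at this
  omega

/-- `P = ⟨η, ψ⟩ ≤ PSL₃(3)` is a Frobenius group of order `39` with kernel `⟨η⟩` of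
order `13` and complement `⟨ψ⟩` of order `3`: `⟨η⟩` is normal in `P`, `P` is the
(inner) semidirect product `⟨η⟩ ⋊ ⟨ψ⟩`, and `⟨ψ⟩` acts fixed-point-freely on
`⟨η⟩ \ {1}`. -/
theorem stmt_16 :
    Nat.card (Subgroup.closure {etaM, psiM} : Subgroup G3) = 39 ∧
    Nat.card (Subgroup.closure {etaM} : Subgroup G3) = 13 ∧
    Nat.card (Subgroup.closure {psiM} : Subgroup G3) = 3 ∧
    (∀ g ∈ Subgroup.closure {etaM, psiM}, ∀ x ∈ Subgroup.closure {etaM},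
      g * x * g⁻¹ ∈ (Subgroup.closure {etaM} : Subgroup G3)) ∧
    Subgroup.closure {etaM} ⊔ Subgroup.closure {psiM} =
      (Subgroup.closure {etaM, psiM} : Subgroup G3) ∧
    Subgroup.closure {etaM} ⊓ Subgroup.closure {psiM} = (⊥ : Subgroup G3) ∧
    (∀ h ∈ (Subgroup.closure {psiM} : Subgroup G3), h ≠ 1 →
      ∀ x ∈ (Subgroup.closure {etaM} : Subgroup G3), x ≠ 1 → h * x ≠ x * h) := by
  refine ⟨cardP, cardK, cardH, part4, supP, infBot, ?_⟩
  intro h hh hne x hx xne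
  rw [← Subgroup.zpowers_eq_closure] at hh hx
  obtain ⟨n, rfl⟩ := mem_powers_iff_mem_zpowers.2 hh
  obtain ⟨m, rfl⟩ := mem_powers_iff_mem_zpowers.2 hx
  beta_reduce at hne xne ⊢
  have e1 := pow_mod_orderOf (x := psiM) (n := n)
  rw [orderPsi] at e1
  have e2 := pow_mod_orderOf (x := etaM) (n := m)
  rw [orderEta] at e2
  rw [← e1] at hne ⊢
  rw [← e2] at xne ⊢
  have key : ∀ a < 3, ∀ b < 13, psiM ^ a ≠ 1 → etaM ^ b ≠ 1 →
      psiM ^ a * etaM ^ b ≠ etaM ^ b * psiM ^ a := by decide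
  exact key _ (Nat.mod_lt _ (by norm_num)) _ (Nat.mod_lt _ (by norm_num)) hne xne
end
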